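/- If μ̲ > 1/2, then the function ΔI(γ) := I((μ̄,μ̲);γ) - I((μ̲,μ̲);γ) satisfies ΔI(A/B) < 0 and dΔI/dγ = (μ̄-μ̲)(1-2μ̲)ln γ/(γ+1)² < 0 for γ > A/B; consequently ΔI(γ) < 0 for all γ ≥ A/B. -/

import Mathlib

/-- If μ̲ > 1/2, then ΔI(γ) := I((μ̄,μ̲);γ) - I((μ̲,μ̲);γ) satisfies ΔI(A/B) < 0,
its derivative (μ̄-μ̲)(1-2μ̲)ln γ/(γ+1)² is negative for γ > A/B, and hence
ΔI(γ) < 0 for all γ ≥ A/B. -/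
theorem stmt_14 (μl μh : ℝ) (h0 : 0 < μl) (hlh : μl < μh) (h1 : μh < 1)
    (hμl : 1 / 2 < μl)
    (A B : ℝ) (hA : A = μh * (1 - μl)) (hB : B = μl * (1 - μh))
    (h : ℝ → ℝ)
    (hh : ∀ x : ℝ, h x = x * Real.log x + (1 - x) * Real.log (1 - x))
    (ΔI : ℝ → ℝ)
    (hΔI : ∀ γ : ℝ, ΔI γ =
      (A * h (γ * (γ * A - B) / ((γ ^ 2 - 1) * A))
        + B * h ((γ * A - B) / ((γ ^ 2 - 1) * B))
        - (A + B) * h ((γ * A - B) / ((γ - 1) * (A + B))))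
      - 2 * μl * (1 - μl) * (h (γ / (γ + 1)) - h (1 / 2)))
    (hderiv : ∀ γ : ℝ, A / B < γ →
      deriv ΔI γ = (μh - μl) * (1 - 2 * μl) * Real.log γ / (γ + 1) ^ 2) :
    ΔI (A / B) < 0 ∧
    (∀ γ : ℝ, A / B < γ → deriv ΔI γ < 0) ∧
    (∀ γ : ℝ, A / B ≤ γ → ΔI γ < 0) := by
  have hμl1 : μl < 1 := hlh.trans h1
  have hB0 : 0 < B := by rw [hB]; nlinarith
  have hA0 : 0 < A := by rw [hA]; nlinarith
  have hBA : B < A := by rw [hA, hB]; nlinarith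
  have h1AB : 1 < A / B := (one_lt_div hB0).2 hBA
  -- h in terms of binEntropy
  have hneg : h = fun x => -Real.binEntropy x := funext fun x => by
    rw [hh, Real.binEntropy, Real.log_inv, Real.log_inv]; ring
  have hconth : Continuous h := by rw [hneg]; exact Real.binEntropy_continuous.neg
  -- value of h at 1 and 1/2
  have h1' : h 1 = 0 := by rw [hneg]; simp
  have hhalf : h (1 / 2 : ℝ) = -Real.log 2 := by
    rw [hneg, show (1/2:ℝ) = 2⁻¹ by norm_num]
    simp [Real.binEntropy_two_inv]
  -- Part 1 : ΔI (A/B) < 0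
  have part1 : ΔI (A / B) < 0 := by
    have e1 : (A / B) * ((A / B) * A - B) / (((A / B) ^ 2 - 1) * A) = 1 := by
      rw [div_eq_one_iff_eq]
      · field_simp
      · have : 0 < (A / B) ^ 2 - 1 := by nlinarith
        positivity
    have e2 : ((A / B) * A - B) / (((A / B) ^ 2 - 1) * B) = 1 := by
      rw [div_eq_one_iff_eq]
      · field_simp
      · have : 0 < (A / B) ^ 2 - 1 := by nlinarith
        positivity
    have e3 : ((A / B) * A - B) / ((A / B - 1) * (A + B)) = 1 := by
      rw [div_eq_one_iff_eq]
      · field_simp; ring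
      · have h1 : 0 < A / B - 1 := by linarith
        have h2 : 0 < A + B := by linarith
        positivity
    have e4 : (A / B) / (A / B + 1) = A / (A + B) := by
      rw [div_eq_div_iff (by linarith) (by linarith)]
      field_simp
    have ht : A / (A + B) ≠ 2⁻¹ := by
      intro hc
      rw [div_eq_iff (ne_of_gt (by linarith : (0:ℝ) < A + B))] at hc
      linarith
    have hbe : Real.binEntropy (A / (A + B)) < Real.log 2 :=
      Real.binEntropy_lt_log_two.2 ht
    have hpos : 0 < h (A / (A + B)) - h (1 / 2) := by
      have hval : h (A / (A + B)) = -Real.binEntropy (A / (A + B)) := by rw [hneg]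
      rw [hval, hhalf]; linarith
    rw [hΔI, e1, e2, e3, e4, h1']
    have hc : 0 < 2 * μl * (1 - μl) := by nlinarith
    nlinarith [mul_pos hc hpos]
  -- Part 2 : derivative negative
  have part2 : ∀ γ : ℝ, A / B < γ → deriv ΔI γ < 0 := by
    intro γ hγ
    have hγ1 : 1 < γ := h1AB.trans hγ
    rw [hderiv γ hγ]
    have hlog : 0 < Real.log γ := Real.log_pos hγ1
    have hnum : (μh - μl) * (1 - 2 * μl) * Real.log γ < 0 := by
      have : (μh - μl) * (1 - 2 * μl) < 0 :=
        mul_neg_of_pos_of_neg (by linarith) (by linarith)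
      exact mul_neg_of_neg_of_pos this hlog
    exact div_neg_of_neg_of_pos hnum (by positivity)
  refine ⟨part1, part2, ?_⟩
  -- continuity of ΔI on [A/B, ∞)
  have hcont : ContinuousOn ΔI (Set.Ici (A / B)) := by
    have hden : ∀ γ ∈ Set.Ici (A / B), (1 : ℝ) < γ := fun γ hγ => lt_of_lt_of_le h1AB hγ
    have c1 : ContinuousOn (fun γ : ℝ => γ * (γ * A - B) / ((γ ^ 2 - 1) * A))
        (Set.Ici (A / B)) := by
      apply ContinuousOn.div (by fun_prop) (by fun_prop)
      intro γ hγ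
      have := hden γ hγ
      have : 0 < γ ^ 2 - 1 := by nlinarith
      positivity
    have c2 : ContinuousOn (fun γ : ℝ => (γ * A - B) / ((γ ^ 2 - 1) * B))
        (Set.Ici (A / B)) := by
      apply ContinuousOn.div (by fun_prop) (by fun_prop)
      intro γ hγ
      have := hden γ hγ
      have : 0 < γ ^ 2 - 1 := by nlinarith
      positivity
    have c3 : ContinuousOn (fun γ : ℝ => (γ * A - B) / ((γ - 1) * (A + B)))
        (Set.Ici (A / B)) := by
      apply ContinuousOn.div (by fun_prop) (by fun_prop)
      intro γ hγ
      have := hden γ hγ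
      have h2 : 0 < γ - 1 := by linarith
      have h3 : 0 < A + B := by linarith
      positivity
    have c4 : ContinuousOn (fun γ : ℝ => γ / (γ + 1)) (Set.Ici (A / B)) := by
      apply ContinuousOn.div (by fun_prop) (by fun_prop)
      intro γ hγ
      have := hden γ hγ
      linarith
    have hg : ContinuousOn (fun γ : ℝ =>
        (A * h (γ * (γ * A - B) / ((γ ^ 2 - 1) * A))
          + B * h ((γ * A - B) / ((γ ^ 2 - 1) * B))
          - (A + B) * h ((γ * A - B) / ((γ - 1) * (A + B))))
        - 2 * μl * (1 - μl) * (h (γ / (γ + 1)) - h (1 / 2))) (Set.Ici (A / B)) := by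
      exact (((continuousOn_const.mul (hconth.comp_continuousOn c1)).add
        (continuousOn_const.mul (hconth.comp_continuousOn c2))).sub
        (continuousOn_const.mul (hconth.comp_continuousOn c3))).sub
        (continuousOn_const.mul ((hconth.comp_continuousOn c4).sub continuousOn_const))
    exact hg.congr fun γ _ => hΔI γ
  have hanti : StrictAntiOn ΔI (Set.Ici (A / B)) := by
    apply strictAntiOn_of_deriv_neg (convex_Ici _) hcont
    intro x hx
    rw [interior_Ici] at hx
    exact part2 x hx
  intro γ hγ
  rcases eq_or_lt_of_le hγ with rfl | hlt
  · exact part1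
  · exact lt_trans (hanti Set.self_mem_Ici hγ hlt) part1
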